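/- Let M be a matroid of rank at least 2 on ground set E and H_G a corank-one matroid such that M ∧ H_G is loopfree. A set F that is a flat of both M and H_G is a flat of M ∧ H_G if and only if either F ∪ G = E, or there is no flat F' of M covering F with F' ∪ G = E. -/

import Mathlib

open Matroid Set
open scoped Classical

variable {α : Type*}

/-- A circuit of a matroid: a minimal dependent set. -/
def Matroid.Circuit' (M : Matroid α) (C : Set α) : Prop :=
  M.Dep C ∧ ∀ D, D ⊂ C → M.Indep D

/-- The cyclic part `cyc_M(F)` of a set `F`: the union of all circuits of `M` contained
in `F`. -/
def Matroid.cyc (M : Matroid α) (F : Set α) : Set α :=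
  ⋃₀ {C | M.Circuit' C ∧ C ⊆ F}

/-- The (extended) rank of a set in a matroid: the supremum of the cardinalities of the
independent subsets. -/
noncomputable def Matroid.eRk' (M : Matroid α) (X : Set α) : ℕ∞ :=
  ⨆ I ∈ {I | M.Indep I ∧ I ⊆ X}, I.encard

/-- The rank of a matroid. -/
noncomputable def Matroid.rk' (M : Matroid α) : ℕ∞ := M.eRk' M.E

/-- A matroid is loopfree if every element of the ground set is independent. -/
def Matroid.Loopless' (M : Matroid α) : Prop := ∀ e ∈ M.E, M.Indep {e}

/-- `U` is the matroid union `M ∨ N`: its independent sets are exactly the unions of an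
independent set of `M` and an independent set of `N`. -/
def IsMatroidUnion (M N U : Matroid α) : Prop :=
  U.E = M.E ∧ ∀ X, U.Indep X ↔ ∃ I J, M.Indep I ∧ N.Indep J ∧ X = I ∪ J

/-- `P` is the matroid intersection `M ∧ N := (M* ∨ N*)*`. -/
def IsMatroidInter (M N P : Matroid α) : Prop :=
  ∃ U, IsMatroidUnion M✶ N✶ U ∧ P = U✶

/-- Contraction of a set in a matroid, defined by duality: `M/A = (M* \ A)*`. -/
def Matroid.contract' (M : Matroid α) (A : Set α) : Matroid α := (M✶ ↾ (M.E \ A))✶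

/-- A cyclic flat: a flat which is the union of the circuits contained in it. -/
def Matroid.CyclicFlat (M : Matroid α) (F : Set α) : Prop :=
  M.IsFlat F ∧ F = M.cyc F

/-- A nested matroid: one whose cyclic flats form a chain under inclusion. -/
def Matroid.Nested (M : Matroid α) : Prop := IsChain (· ⊆ ·) {F | M.CyclicFlat F}

/-- `U` is the uniform matroid of rank `r` on the ground set `S`: its bases are exactly the
`r`-element subsets of `S`. -/
def IsUnifOn (S : Set α) (r : ℕ) (U : Matroid α) : Prop :=
  U.E = S ∧ ∀ B, U.IsBase B ↔ B ⊆ S ∧ B.encard = r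

/-- `H` is the corank-one matroid `H_G := U_{|G|,G} ⊕ U_{|Gᶜ|-1,Gᶜ}` on the ground set
`univ` whose set of coloops is `G`. -/
def IsHG (G : Set α) (H : Matroid α) : Prop :=
  ∃ (U' : Matroid α) (hd : Disjoint (Matroid.freeOn G).E U'.E),
    IsUnifOn Gᶜ (Gᶜ.ncard - 1) U' ∧ H = (Matroid.freeOn G).disjointSum U' hd

/-- `P` is the iterated matroid intersection of a list of matroids (the empty intersection
being the free matroid `U_{n,n}` on the ground set `univ`). -/
def IsFoldInter : List (Matroid α) → Matroid α → Prop
  | [], P => P = Matroid.freeOn Set.univ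
  | M :: l, P => ∃ Q, IsFoldInter l Q ∧ IsMatroidInter M Q P

lemma HG_base [Fintype α] {G : Set α} {H : Matroid α} (hGc : 1 ≤ Gᶜ.ncard)
    (hH : IsHG G H) : ∀ B, H.IsBase B ↔ ∃ e ∈ Gᶜ, B = univ \ {e} := by
  obtain ⟨U', hd, ⟨hU'E, hU'B⟩, rfl⟩ := hH
  intro B
  rw [Matroid.disjointSum_isBase_iff]
  simp only [Matroid.freeOn_ground, hU'E, Matroid.freeOn_isBase_iff]
  constructor
  · rintro ⟨hBG, hBGc, -⟩
    rw [hU'B] at hBGc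
    obtain ⟨hsub, hcard⟩ := hBGc
    have hfin : (Gᶜ : Set α).Finite := Set.toFinite _
    have h1 : (Gᶜ \ (B ∩ Gᶜ)).encard + (B ∩ Gᶜ).encard = Gᶜ.encard :=
      Set.encard_diff_add_encard_of_subset hsub
    have h2 : Gᶜ.encard = (Gᶜ.ncard : ℕ∞) := (hfin.cast_ncard_eq).symm
    have h3 : ((Gᶜ.ncard - 1 : ℕ) : ℕ∞) + 1 = (Gᶜ.ncard : ℕ∞) := by
      have hn : (Gᶜ.ncard - 1) + 1 = Gᶜ.ncard := by omega
      exact_mod_cast congrArg (Nat.cast : ℕ → ℕ∞) hn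
    have h4 : (Gᶜ \ (B ∩ Gᶜ)).encard = 1 := by
      rw [hcard, h2, ← h3, add_comm ((Gᶜ.ncard - 1 : ℕ) : ℕ∞) 1] at h1
      exact WithTop.add_right_cancel (ENat.coe_ne_top _ : ((Gᶜ.ncard - 1 : ℕ) : ℕ∞) ≠ ⊤) h1
    obtain ⟨e, he⟩ := Set.encard_eq_one.mp h4
    have heGc : e ∈ Gᶜ := by
      have : e ∈ Gᶜ \ (B ∩ Gᶜ) := by rw [he]; exact rfl
      exact this.1
    refine ⟨e, heGc, ?_⟩
    have hBinter : B ∩ Gᶜ = Gᶜ \ {e} := by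
      rw [← he, Set.diff_diff_cancel_left hsub]
    ext x
    simp only [Set.mem_diff, Set.mem_univ, true_and, Set.mem_singleton_iff]
    constructor
    · intro hx hxe
      subst hxe
      have : x ∈ B ∩ Gᶜ := ⟨hx, heGc⟩
      rw [hBinter] at this
      exact this.2 rfl
    · intro hx
      by_cases hxG : x ∈ G
      · have hxBG : x ∈ B ∩ G := by rw [hBG]; exact hxG
        exact hxBG.1
      · have : x ∈ Gᶜ \ {e} := ⟨hxG, hx⟩
        rw [← hBinter] at this
        exact this.1
  · rintro ⟨e, heGc, rfl⟩
    have heG : e ∉ G := heGc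
    refine ⟨?_, ?_, by rw [union_compl_self]; exact subset_univ _⟩
    · ext x; simp only [Set.mem_inter_iff, Set.mem_diff, Set.mem_univ, true_and,
        Set.mem_singleton_iff]
      exact ⟨fun h => h.2, fun h => ⟨fun he => heG (he ▸ h), h⟩⟩
    · rw [hU'B]
      constructor
      · intro x hx
        exact hx.2
      · have : (univ \ {e}) ∩ Gᶜ = Gᶜ \ {e} := by
          ext x; simp only [Set.mem_inter_iff, Set.mem_diff, Set.mem_univ, true_and,
            Set.mem_singleton_iff, Set.mem_compl_iff]
          tauto
        rw [this]
        have hfin : (Gᶜ : Set α).Finite := Set.toFinite _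
        rw [← (hfin.diff (t := {e})).cast_ncard_eq, Set.ncard_diff_singleton_of_mem heGc]

lemma HG_dual_indep [Fintype α] {G : Set α} {H : Matroid α} (hGc : 1 ≤ Gᶜ.ncard)
    (hH : IsHG G H) : ∀ J, H✶.Indep J ↔ ∃ e ∈ Gᶜ, J ⊆ {e} := by
  have hHE : H.E = univ := by
    obtain ⟨U', hd, ⟨hU'E, -⟩, rfl⟩ := hH
    rw [Matroid.disjointSum_ground_eq, Matroid.freeOn_ground, hU'E, union_compl_self]
  intro J
  rw [Matroid.dual_indep_iff_exists']
  constructor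
  · rintro ⟨-, B, hB, hdisj⟩
    obtain ⟨e, heGc, rfl⟩ := (HG_base hGc hH B).mp hB
    refine ⟨e, heGc, fun x hx => ?_⟩
    by_contra hxe
    exact hdisj.ne_of_mem hx ⟨mem_univ x, hxe⟩ rfl
  · rintro ⟨e, heGc, hJe⟩
    refine ⟨by rw [hHE]; exact subset_univ _, univ \ {e},
      (HG_base hGc hH _).mpr ⟨e, heGc, rfl⟩, ?_⟩
    rw [Set.disjoint_iff]
    rintro x ⟨hxJ, -, hxe⟩
    exact hxe (hJe hxJ)

lemma U_indep [Fintype α] {G : Set α} {M H U : Matroid α} (hGc : 1 ≤ Gᶜ.ncard)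
    (hH : IsHG G H) (hU : IsMatroidUnion M✶ H✶ U) :
    ∀ X, U.Indep X ↔ ∃ e ∈ Gᶜ, M✶.Indep (X \ {e}) := by
  intro X
  rw [hU.2]
  constructor
  · rintro ⟨I, J, hI, hJ, rfl⟩
    obtain ⟨e, heGc, hJe⟩ := (HG_dual_indep hGc hH J).mp hJ
    refine ⟨e, heGc, hI.subset ?_⟩
    rintro x ⟨hx, hxe⟩
    rcases hx with hx | hx
    · exact hx
    · exact absurd (hJe hx) hxe
  · rintro ⟨e, heGc, hXe⟩
    exact ⟨X \ {e}, X ∩ {e}, hXe, (HG_dual_indep hGc hH _).mpr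
      ⟨e, heGc, inter_subset_right⟩, (Set.diff_union_inter X {e}).symm⟩

lemma U_base_struct [Fintype α] {G : Set α} {M H U : Matroid α} (hGc : 1 ≤ Gᶜ.ncard)
    (hH : IsHG G H) (hU : IsMatroidUnion M✶ H✶ U) {B : Set α} (hB : U.IsBase B) :
    ∃ B₀ e, M✶.IsBase B₀ ∧ e ∈ Gᶜ ∧ B = B₀ ∪ {e} := by
  obtain ⟨e, heGc, hind⟩ := (U_indep hGc hH hU B).mp hB.indep
  obtain ⟨B₀, hB₀, hsub⟩ := hind.exists_isBase_superset
  have hBsub : B ⊆ B₀ ∪ {e} := by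
    intro x hx
    by_cases hxe : x = e
    · exact Or.inr (by simp [hxe])
    · exact Or.inl (hsub ⟨hx, hxe⟩)
  have hUind : U.Indep (B₀ ∪ {e}) := by
    refine (U_indep hGc hH hU _).mpr ⟨e, heGc, hB₀.indep.subset ?_⟩
    rintro x ⟨hx, hxe⟩
    rcases hx with hx | hx
    · exact hx
    · exact absurd hx hxe
  exact ⟨B₀, e, hB₀, heGc, hB.eq_of_subset_indep hUind hBsub⟩

lemma indep_encard_le_base [Fintype α] {N : Matroid α} {I B : Set α}
    (hI : N.Indep I) (hB : N.IsBase B) : I.encard ≤ B.encard := by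
  obtain ⟨B', hB', hIB'⟩ := hI.exists_isBase_superset
  exact (Set.encard_le_encard hIB').trans (hB'.encard_eq_encard_of_isBase hB).le

lemma U_base_mk [Fintype α] {G : Set α} {M H U : Matroid α} (hGc : 1 ≤ Gᶜ.ncard)
    (hH : IsHG G H) (hU : IsMatroidUnion M✶ H✶ U) {B₀ : Set α} {e : α}
    (hB₀ : M✶.IsBase B₀) (heGc : e ∈ Gᶜ) (heB₀ : e ∉ B₀) : U.IsBase (B₀ ∪ {e}) := by
  rw [Matroid.isBase_iff_maximal_indep]
  constructor
  · refine (U_indep hGc hH hU _).mpr ⟨e, heGc, hB₀.indep.subset ?_⟩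
    rintro x ⟨hx, hxe⟩
    rcases hx with hx | hx
    · exact hx
    · exact absurd hx hxe
  · intro Y hY hsubY
    obtain ⟨e', he'Gc, hYind⟩ := (U_indep hGc hH hU Y).mp hY
    have h1 : Y.encard ≤ B₀.encard + 1 := by
      have h2 : Y ⊆ insert e' (Y \ {e'}) := by
        intro x hx
        by_cases hxe : x = e'
        · exact Or.inl hxe
        · exact Or.inr ⟨hx, hxe⟩
      calc Y.encard ≤ (insert e' (Y \ {e'})).encard := Set.encard_le_encard h2
        _ ≤ (Y \ {e'}).encard + 1 := Set.encard_insert_le _ _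
        _ ≤ B₀.encard + 1 := add_le_add_left (indep_encard_le_base hYind hB₀) 1
    have h3 : (B₀ ∪ {e}).encard = B₀.encard + 1 := by
      rw [Set.union_singleton, Set.encard_insert_of_notMem heB₀]
    have := (Set.toFinite _).eq_of_subset_of_encard_le hsubY (h3 ▸ h1)
    exact this.symm.subset

lemma P_indep [Fintype α] {G : Set α} {M H U : Matroid α} (hGc : 1 ≤ Gᶜ.ncard)
    (hME : M.E = univ) (hH : IsHG G H) (hU : IsMatroidUnion M✶ H✶ U)
    (hPl : U✶.Loopless') :
    ∀ X, U✶.Indep X ↔ M.Indep X ∧ ∃ g ∈ Gᶜ, g ∉ M.closure X := by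
  have hUE : U.E = univ := hU.1.trans (by rw [Matroid.dual_ground, hME])
  intro X
  rw [Matroid.dual_indep_iff_exists']
  constructor
  · rintro ⟨-, B, hB, hdisj⟩
    obtain ⟨B₀, e, hB₀, heGc, rfl⟩ := U_base_struct hGc hH hU hB
    have hBM : M.IsBase (univ \ B₀) := by
      have := (Matroid.dual_isBase_iff (by rw [hME]; exact subset_univ _)).mp hB₀
      rwa [hME] at this
    have hXBM : X ⊆ univ \ B₀ := fun x hx =>
      ⟨mem_univ x, fun hxB => hdisj.ne_of_mem hx (Or.inl hxB) rfl⟩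
    have hXind : M.Indep X := hBM.indep.subset hXBM
    by_cases heB₀ : e ∈ B₀
    · -- degenerate case: contradiction with looplessness
      exfalso
      have hBB₀ : B₀ ∪ {e} = B₀ := by
        rw [Set.union_singleton, Set.insert_eq_of_mem heB₀]
      rw [hBB₀] at hB hdisj
      -- every element ≠ e is in the dual closure of B₀ \ {e}
      have hC2 : ∀ f, f ≠ e → f ∈ M✶.closure (B₀ \ {e}) := by
        intro f hfe
        by_cases hfB₀ : f ∈ B₀
        · exact M✶.subset_closure (B₀ \ {e})
            (by rw [Matroid.dual_ground, hME]; exact subset_univ _) ⟨hfB₀, hfe⟩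
        · by_contra hfcl
          have hind : M✶.Indep (insert f (B₀ \ {e})) := by
            rw [(hB₀.indep.diff {e}).insert_indep_iff_of_notMem
              (fun h => hfB₀ h.1)]
            exact ⟨by rw [Matroid.dual_ground, hME]; exact mem_univ f, hfcl⟩
          have hUind : U.Indep (B₀ ∪ {f}) := by
            refine (U_indep hGc hH hU _).mpr ⟨e, heGc, hind.subset ?_⟩
            rintro x ⟨hx, hxe⟩
            rcases hx with hx | hx
            · exact Or.inr ⟨hx, hxe⟩
            · exact Or.inl hx
          have heq := hB.eq_of_subset_indep hUind subset_union_left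
          have hfB : f ∈ B₀ := by rw [heq]; exact Or.inr rfl
          exact hfB₀ hfB
      -- hence every dual base contains e
      have hC3 : ∀ B', M✶.IsBase B' → e ∈ B' := by
        intro B' hB'
        by_contra heB'
        have hB'sub : B' ⊆ M✶.closure (B₀ \ {e}) := fun x hx =>
          hC2 x (fun h => heB' (h ▸ hx))
        have hsp : M✶.closure B' = M✶.E := hB'.spanning.closure_eq
        have : M✶.closure B' ⊆ M✶.closure (B₀ \ {e}) := by
          rw [← M✶.closure_closure (B₀ \ {e})]
          exact M✶.closure_subset_closure hB'sub
        rw [hsp] at this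
        exact hB₀.indep.notMem_closure_diff_of_mem heB₀
          (this (by rw [Matroid.dual_ground, hME]; exact mem_univ e))
      -- contradiction with looplessness
      have hPe : U✶.Indep {e} := hPl e (by
        rw [Matroid.dual_ground, hUE]; exact mem_univ e)
      obtain ⟨-, B'', hB'', hdisj''⟩ := (Matroid.dual_indep_iff_exists').mp hPe
      obtain ⟨B₁, e₁, hB₁, -, rfl⟩ := U_base_struct hGc hH hU hB''
      exact hdisj''.ne_of_mem rfl (Or.inl (hC3 B₁ hB₁)) rfl
    · -- good case
      refine ⟨hXind, e, heGc, fun hecl => ?_⟩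
      have hXsub : X ⊆ (univ \ B₀) \ {e} := fun x hx =>
        ⟨hXBM hx, fun hxe => hdisj.ne_of_mem hx (Or.inr hxe) rfl⟩
      have : M.closure X ⊆ M.closure ((univ \ B₀) \ {e}) := M.closure_subset_closure hXsub
      exact hBM.indep.notMem_closure_diff_of_mem ⟨mem_univ e, heB₀⟩ (this hecl)
  · rintro ⟨hXind, g, hgGc, hgcl⟩
    have hgX : g ∉ X := fun h => hgcl (M.subset_closure X (by rw [hME]; exact subset_univ _) h)
    have hins : M.Indep (insert g X) := by
      rw [hXind.insert_indep_iff_of_notMem hgX]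
      exact ⟨by rw [hME]; exact mem_univ g, hgcl⟩
    obtain ⟨BM, hBM, hsubBM⟩ := hins.exists_isBase_superset
    have hB₀ : M✶.IsBase (univ \ BM) := by
      rw [Matroid.dual_isBase_iff (by rw [hME]; exact subset_univ _)]
      rw [hME, Set.diff_diff_cancel_left (subset_univ BM)]
      exact hBM
    have hgBM : g ∈ BM := hsubBM (Or.inl rfl)
    have hUB : U.IsBase ((univ \ BM) ∪ {g}) :=
      U_base_mk hGc hH hU hB₀ hgGc (fun h => h.2 hgBM)
    refine ⟨by rw [hUE]; exact subset_univ _, _, hUB, ?_⟩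
    rw [Set.disjoint_iff]
    rintro x ⟨hxX, hx⟩
    rcases hx with hx | hx
    · exact hx.2 (hsubBM (Or.inr hxX))
    · exact hgX (hx ▸ hxX)

lemma myClosure_flat (M : Matroid α) (X : Set α) : M.IsFlat (M.closure X) := by
  rw [Matroid.closure_def]
  have hne : Nonempty {F : Set α // F ∈ {F | M.IsFlat F ∧ X ∩ M.E ⊆ F}} :=
    ⟨⟨M.E, M.ground_isFlat, inter_subset_right⟩⟩
  rw [sInter_eq_iInter]
  exact Matroid.IsFlat.iInter fun F => F.2.1

lemma myFlat_of_closure_subset (M : Matroid α) (F : Set α) (hFE : F ⊆ M.E)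
    (h : M.closure F ⊆ F) : M.IsFlat F := by
  have h2 : M.closure F = F := h.antisymm (M.subset_closure F hFE)
  rw [← h2]; exact myClosure_flat M F

/-- Let `M` be a matroid of rank at least `2` and `H_G` a corank-one matroid such that
`M ∧ H_G` is loopfree. A set `F` that is a flat of both `M` and `H_G` is a flat of
`M ∧ H_G` if and only if either `F ∪ G = E`, or no flat `F'` of `M` covering `F`
satisfies `F' ∪ G = E`. -/
theorem matroidInter_HG_flat_iff [Fintype α] (M H P : Matroid α) (G : Set α)
    (hME : M.E = Set.univ) (hMr : (2 : ℕ∞) ≤ M.rk')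
    (hG : G.ncard ≤ Fintype.card α - 2) (hH : IsHG G H)
    (hP : IsMatroidInter M H P) (hPl : P.Loopless')
    (F : Set α) (hFM : M.IsFlat F) (hFH : H.IsFlat F) :
    P.IsFlat F ↔ (F ∪ G = Set.univ ∨
      ¬ ∃ F', M.IsFlat F' ∧ F ⊂ F' ∧
        (¬ ∃ F'', M.IsFlat F'' ∧ F ⊂ F'' ∧ F'' ⊂ F') ∧ F' ∪ G = Set.univ) := by
  obtain ⟨U, hU, hPU⟩ := hP
  subst hPU
  -- cardinality facts
  have hcard : 2 ≤ Fintype.card α := by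
    have hub : M.rk' ≤ (Fintype.card α : ℕ∞) := by
      rw [Matroid.rk', Matroid.eRk']
      refine iSup₂_le fun I hI => ?_
      calc I.encard ≤ (univ : Set α).encard := Set.encard_le_encard (subset_univ I)
        _ = (Fintype.card α : ℕ∞) := by
          rw [Set.encard_univ, ENat.card_eq_coe_fintype_card]
    exact_mod_cast hMr.trans hub
  have hGc1 : 1 ≤ Gᶜ.ncard := by
    have := Set.ncard_add_ncard_compl G
    rw [Nat.card_eq_fintype_card] at this
    omega
  have hUE : U.E = univ := hU.1.trans (by rw [Matroid.dual_ground, hME])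
  have hPE : U✶.E = univ := by rw [Matroid.dual_ground, hUE]
  have hPi := P_indep hGc1 hME hH hU hPl
  by_cases hFG : F ∪ G = univ
  · -- Case B : F ∪ G = univ, F is a flat of P
    have hflat : U✶.IsFlat F := by
      apply myFlat_of_closure_subset _ _ (by rw [hPE]; exact subset_univ F)
      intro x hx
      by_contra hxF
      obtain ⟨X, hX⟩ := U✶.exists_isBasis F (by rw [hPE]; exact subset_univ F)
      rw [← hX.closure_eq_closure] at hx
      have hxX : x ∉ X := fun h => hxF (hX.subset h)
      have hdep : U✶.Dep (insert x X) :=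
        (hX.indep.mem_closure_iff_of_notMem hxX).mp hx
      obtain ⟨hXM, g₀, hg₀Gc, hg₀cl⟩ := (hPi X).mp hX.indep
      have hclXF : M.closure X ⊆ F := by
        rw [← hFM.closure]; exact M.closure_subset_closure hX.subset
      have hxclM : x ∉ M.closure X := fun h => hxF (hclXF h)
      have hinsM : M.Indep (insert x X) := by
        rw [hXM.insert_indep_iff_of_notMem hxX]
        exact ⟨by rw [hME]; exact mem_univ x, hxclM⟩
      have hwit : ∃ g ∈ Gᶜ, g ∉ M.closure (insert x X) := by
        by_contra hcon
        push_neg at hcon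
        have hg₀mem : g₀ ∈ M.closure (insert x X) := hcon g₀ hg₀Gc
        have hex := Matroid.closure_exchange (M := M) ⟨hg₀mem, hg₀cl⟩
        have hg₀F : g₀ ∈ F := by
          rcases (eq_univ_iff_forall.mp hFG g₀ : g₀ ∈ F ∪ G) with h | h
          · exact h
          · exact absurd h hg₀Gc
        have hsubF : M.closure (insert g₀ X) ⊆ F := by
          rw [← hFM.closure]
          exact M.closure_subset_closure (insert_subset hg₀F hX.subset)
        exact hxF (hsubF hex.1)
      exact hdep.not_indep ((hPi _).mpr ⟨hinsM, hwit⟩)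
    exact iff_of_true hflat (Or.inl hFG)
  · -- Case A : F ∪ G ≠ univ
    have hw : ∃ w, w ∉ F ∧ w ∉ G := by
      by_contra hcon
      push_neg at hcon
      apply hFG
      rw [eq_univ_iff_forall]
      intro x
      by_cases hxF : x ∈ F
      · exact Or.inl hxF
      · exact Or.inr (hcon x hxF)
    obtain ⟨w, hwF, hwG⟩ := hw
    have key0 : ∀ X, X ⊆ F → (U✶.Indep X ↔ M.Indep X) := by
      intro X hXF
      rw [hPi]
      refine ⟨fun h => h.1, fun h => ⟨h, w, hwG, fun hcl => hwF ?_⟩⟩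
      have : M.closure X ⊆ F := by
        rw [← hFM.closure]; exact M.closure_subset_closure hXF
      exact this hcl
    obtain ⟨I, hI⟩ := M.exists_isBasis F (by rw [hME]; exact subset_univ F)
    have hclIF : M.closure I = F := by rw [hI.closure_eq_closure, hFM.closure]
    have hIP : U✶.IsBasis I F := by
      apply Matroid.Indep.isBasis_of_forall_insert ((key0 I hI.subset).mpr hI.indep) hI.subset
      intro x hx
      have hMdep : M.Dep (insert x I) := by
        rw [hI.indep.insert_dep_iff]
        exact ⟨by rw [hclIF]; exact hx.1, hx.2⟩
      rw [Matroid.dep_iff]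
      exact ⟨fun h => hMdep.not_indep ((hPi _).mp h).1,
        by rw [hPE]; exact subset_univ _⟩
    have keycl : ∀ x, x ∉ F → (x ∈ U✶.closure F ↔ Gᶜ ⊆ M.closure (insert x F)) := by
      intro x hxF
      have hxI : x ∉ I := fun h => hxF (hI.subset h)
      have hinsM : M.Indep (insert x I) := by
        rw [hI.indep.insert_indep_iff_of_notMem hxI]
        exact ⟨by rw [hME]; exact mem_univ x, fun h => hxF (by rw [← hclIF]; exact h)⟩
      have hclins : M.closure (insert x I) = M.closure (insert x F) := by
        conv_rhs => rw [← hclIF]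
        rw [Matroid.closure_insert_closure_eq_closure_insert]
      rw [← hIP.closure_eq_closure, hIP.indep.mem_closure_iff_of_notMem hxI,
        Matroid.dep_iff, hPi]
      constructor
      · rintro ⟨hnind, -⟩ g hgGc
        by_contra hgcl
        exact hnind ⟨hinsM, g, hgGc, fun h => hgcl (by rw [← hclins]; exact h)⟩
      · intro hsub
        refine ⟨fun h => ?_, by rw [hPE]; exact subset_univ _⟩
        obtain ⟨-, g, hgGc, hgcl⟩ := h
        exact hgcl (by rw [hclins]; exact hsub hgGc)
    rw [or_iff_right hFG]
    constructor
    · intro hPF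
      rintro ⟨F', hF', hFF', hcov, hF'G⟩
      obtain ⟨x, hxF', hxF⟩ := exists_of_ssubset hFF'
      have hGcF' : Gᶜ ⊆ F' := fun g hg =>
        (eq_univ_iff_forall.mp hF'G g).elim id fun h => absurd h hg
      have hclF' : M.closure (insert x F) = F' := by
        have hsub1 : M.closure (insert x F) ⊆ F' := by
          rw [← hF'.closure]
          exact M.closure_subset_closure (insert_subset hxF' hFF'.subset)
        by_contra hne
        apply hcov
        refine ⟨M.closure (insert x F), myClosure_flat M _, ?_, hsub1.ssubset_of_ne hne⟩
        have hFsub : F ⊆ M.closure (insert x F) :=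
          (subset_insert x F).trans
            (M.subset_closure _ (by rw [hME]; exact subset_univ _))
        refine hFsub.ssubset_of_ne fun h => hxF ?_
        rw [h]
        exact M.subset_closure _ (by rw [hME]; exact subset_univ _) (mem_insert x F)
      have hmem : x ∈ U✶.closure F := (keycl x hxF).mpr (by rw [hclF']; exact hGcF')
      rw [hPF.closure] at hmem
      exact hxF hmem
    · intro hnc
      apply myFlat_of_closure_subset _ _ (by rw [hPE]; exact subset_univ F)
      intro x hx
      by_contra hxF
      have hGccl : Gᶜ ⊆ M.closure (insert x F) := (keycl x hxF).mp hx
      apply hnc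
      refine ⟨M.closure (insert x F), myClosure_flat M _, ?_, ?_, ?_⟩
      · have hFsub : F ⊆ M.closure (insert x F) :=
          (subset_insert x F).trans
            (M.subset_closure _ (by rw [hME]; exact subset_univ _))
        refine hFsub.ssubset_of_ne fun h => hxF ?_
        rw [h]
        exact M.subset_closure _ (by rw [hME]; exact subset_univ _) (mem_insert x F)
      · rintro ⟨F'', hF''flat, hFF'', hF''cl⟩
        obtain ⟨y, hyF'', hyF⟩ := exists_of_ssubset hFF''
        have hycl : y ∈ M.closure (insert x F) := hF''cl.subset hyF''
        have hynotF : y ∉ M.closure F := by rw [hFM.closure]; exact hyF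
        have hex := Matroid.closure_exchange (M := M) ⟨hycl, hynotF⟩
        have h1 : M.closure (insert y F) ⊆ F'' := by
          rw [← hF''flat.closure]
          exact M.closure_subset_closure (insert_subset hyF'' hFF''.subset)
        have hxF'' : x ∈ F'' := h1 hex.1
        have h2 : M.closure (insert x F) ⊆ F'' := by
          rw [← hF''flat.closure]
          exact M.closure_subset_closure (insert_subset hxF'' hFF''.subset)
        exact hF''cl.not_subset h2
      · rw [eq_univ_iff_forall]
        intro y
        by_cases hyG : y ∈ G
        · exact Or.inr hyG
        · exact Or.inl (hGccl hyG)
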